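/- For natural numbers j > k and n = 2m with k ≤ j ≤ n, the identity Σ_{ℓ≥0} [C(n−j, m−ℓ)/C(n−k−1, m−ℓ)] · C(2ℓ+1, k+1) · C(j+1, 2ℓ+1) = C(j+1, k+1) holds, where the sum is over those ℓ with C(n−k−1, m−ℓ) ≠ 0; and for j = k the sum equals 1 + (−1)^k. -/

import Mathlib

/-- Binomial coefficient for integer arguments, with the convention that
`C a b = 0` when `b < 0` or `b > a`. -/
def C (a b : ℤ) : ℤ := if 0 ≤ b ∧ b ≤ a then (a.toNat.choose b.toNat : ℤ) else 0

open Finset Nat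

/-- subset-of-subset cross identity -/
lemma cross_choose (n a b : ℕ) (h : a + b ≤ n) :
    (n - b).choose a * n.choose b = (n - a).choose b * n.choose a := by
  have h1 := Nat.choose_mul (n := n) (k := a + b) (s := b) (Nat.le_add_left _ _)
  have h2 := Nat.choose_mul (n := n) (k := a + b) (s := a) (Nat.le_add_right _ _)
  have hs : (a + b).choose a = (a + b).choose b := Nat.choose_symm_add
  have e1 : (a + b) - b = a := by omega
  have e2 : (a + b) - a = b := by omega
  rw [e1] at h1
  rw [e2] at h2
  rw [hs] at h2
  calc (n - b).choose a * n.choose b = n.choose (a + b) * (a + b).choose b := by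
        rw [mul_comm]; exact h1.symm
    _ = n.choose a * (n - a).choose b := h2
    _ = (n - a).choose b * n.choose a := mul_comm _ _

def Esum (N r M : ℕ) : ℕ := ∑ u ∈ range (N + 1), N.choose (2 * u) * (M + u).choose r
def Osum (N r M : ℕ) : ℕ := ∑ u ∈ range (N + 1), N.choose (2 * u + 1) * (M + u).choose r

lemma sum_range_ext (f : ℕ → ℕ) {B B' : ℕ} (h : B ≤ B') (hf : ∀ u, B ≤ u → f u = 0) :
    ∑ u ∈ range B', f u = ∑ u ∈ range B, f u := by
  refine (Finset.sum_subset (Finset.range_subset_range.2 h) ?_).symm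
  intro x _ hx
  exact hf x (by simpa using hx)

lemma Esum_eq_range {N B : ℕ} (r M : ℕ) (hB : N < 2 * B) :
    ∑ u ∈ range B, N.choose (2 * u) * (M + u).choose r = Esum N r M := by
  unfold Esum
  rcases le_total B (N + 1) with hle | hle
  · rw [sum_range_ext _ hle (fun u hu => by
      rw [Nat.choose_eq_zero_of_lt (by omega), Nat.zero_mul])]
  · rw [sum_range_ext _ hle (fun u hu => by
      rw [Nat.choose_eq_zero_of_lt (by omega), Nat.zero_mul])]

lemma Osum_eq_range {N B : ℕ} (r M : ℕ) (hB : N < 2 * B) :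
    ∑ u ∈ range B, N.choose (2 * u + 1) * (M + u).choose r = Osum N r M := by
  unfold Osum
  rcases le_total B (N + 1) with hle | hle
  · rw [sum_range_ext _ hle (fun u hu => by
      rw [Nat.choose_eq_zero_of_lt (by omega), Nat.zero_mul])]
  · rw [sum_range_ext _ hle (fun u hu => by
      rw [Nat.choose_eq_zero_of_lt (by omega), Nat.zero_mul])]

lemma Osum_succ (N r M : ℕ) : Osum (N + 1) r M = Esum N r M + Osum N r M := by
  rw [← Osum_eq_range (N := N + 1) (B := N + 1) r M (by omega)]
  unfold Esum Osum
  rw [← Finset.sum_add_distrib]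
  apply Finset.sum_congr rfl
  intro u _
  rw [Nat.choose_succ_succ' N (2 * u), Nat.add_mul]

lemma Esum_succ (N r M : ℕ) : Esum (N + 1) r M = Esum N r M + Osum N r (M + 1) := by
  have key : Esum (N + 1) r M
      = (∑ u ∈ range (N + 1), (N + 1).choose (2 * (u + 1)) * (M + (u + 1)).choose r)
        + (N + 1).choose (2 * 0) * (M + 0).choose r := by
    unfold Esum
    exact Finset.sum_range_succ' _ (N + 1)
  have split : ∀ u, (N + 1).choose (2 * (u + 1)) * (M + (u + 1)).choose r
      = N.choose (2 * u + 1) * ((M + 1) + u).choose r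
        + N.choose (2 * (u + 1)) * (M + (u + 1)).choose r := by
    intro u
    have h2u : 2 * (u + 1) = (2 * u + 1) + 1 := by ring
    have hM : (M + 1) + u = M + (u + 1) := by omega
    rw [h2u, Nat.choose_succ_succ' N (2 * u + 1), Nat.add_mul, hM]
  rw [key, Finset.sum_congr rfl (fun u _ => split u), Finset.sum_add_distrib]
  have hO : ∑ u ∈ range (N + 1), N.choose (2 * u + 1) * ((M + 1) + u).choose r
      = Osum N r (M + 1) := rfl
  have hE : (∑ u ∈ range (N + 1), N.choose (2 * (u + 1)) * (M + (u + 1)).choose r)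
      + (N + 1).choose (2 * 0) * (M + 0).choose r = Esum N r M := by
    have last : N.choose (2 * (N + 1)) * (M + (N + 1)).choose r = 0 := by
      rw [Nat.choose_eq_zero_of_lt (by omega), Nat.zero_mul]
    rw [Finset.sum_range_succ, last, Nat.add_zero]
    have h0 : (N + 1).choose (2 * 0) * (M + 0).choose r
        = N.choose (2 * 0) * (M + 0).choose r := by simp
    rw [h0]
    exact (Finset.sum_range_succ' (fun u => N.choose (2 * u) * (M + u).choose r) N).symm
  rw [hO]
  omega

lemma Esum_pascalM (N r M : ℕ) :
    Esum N (r + 1) (M + 1) = Esum N (r + 1) M + Esum N r M := by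
  unfold Esum
  rw [← Finset.sum_add_distrib]
  apply Finset.sum_congr rfl
  intro u _
  have : M + 1 + u = (M + u) + 1 := by omega
  rw [this, Nat.choose_succ_succ' (M + u) r, Nat.mul_add]
  ring

lemma Osum_pascalM (N r M : ℕ) :
    Osum N (r + 1) (M + 1) = Osum N (r + 1) M + Osum N r M := by
  unfold Osum
  rw [← Finset.sum_add_distrib]
  apply Finset.sum_congr rfl
  intro u _
  have : M + 1 + u = (M + u) + 1 := by omega
  rw [this, Nat.choose_succ_succ' (M + u) r, Nat.mul_add]
  ring

theorem diagEO : ∀ N M : ℕ,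
    Esum (N + 1) N M = (2 * M + 1).choose N ∧ Osum (N + 1) N M = (2 * M).choose N := by
  intro N
  induction N with
  | zero =>
    intro M
    constructor
    · show ∑ u ∈ range 2, Nat.choose 1 (2 * u) * (M + u).choose 0 = (2 * M + 1).choose 0
      simp [Finset.sum_range_succ, Nat.choose]
    · show ∑ u ∈ range 2, Nat.choose 1 (2 * u + 1) * (M + u).choose 0 = (2 * M).choose 0
      simp [Finset.sum_range_succ, Nat.choose]
  | succ s IH =>
    have sub : ∀ M, Esum (s + 2) s M = (2 * M + 1).choose s + (2 * M + 2).choose s := by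
      intro M
      rw [Esum_succ, (IH M).1, (IH (M + 1)).2]
      have h : 2 * (M + 1) = 2 * M + 2 := by ring
      rw [h]
    have subO : ∀ M, Osum (s + 2) s M = (2 * M + 1).choose s + (2 * M).choose s := by
      intro M
      rw [Osum_succ, (IH M).1, (IH M).2]
    intro M
    induction M with
    | zero =>
      constructor
      · match s with
        | 0 => decide
        | t + 1 =>
          have hL : Esum (t + 3) (t + 2) 0 = 0 := by
            apply Finset.sum_eq_zero
            intro u _
            rcases lt_or_ge u (t + 2) with h | h
            · rw [Nat.choose_eq_zero_of_lt (n := 0 + u) (k := t + 2) (by omega), Nat.mul_zero]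
            · rw [Nat.choose_eq_zero_of_lt (by omega), Nat.zero_mul]
          rw [hL, Nat.choose_eq_zero_of_lt (by omega)]
      · have hL : Osum (s + 2) (s + 1) 0 = 0 := by
          apply Finset.sum_eq_zero
          intro u _
          rcases lt_or_ge u (s + 1) with h | h
          · rw [Nat.choose_eq_zero_of_lt (n := 0 + u) (k := s + 1) (by omega), Nat.mul_zero]
          · rw [Nat.choose_eq_zero_of_lt (by omega), Nat.zero_mul]
        rw [hL, Nat.choose_eq_zero_of_lt (by omega)]
    | succ M ihM =>
      constructor
      · rw [Esum_pascalM, ihM.1, sub M]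
        have h1 : 2 * (M + 1) + 1 = (2 * M + 2) + 1 := by ring
        rw [h1, Nat.choose_succ_succ' (2 * M + 2) s,
          show 2 * M + 2 = (2 * M + 1) + 1 from rfl, Nat.choose_succ_succ' (2 * M + 1) s]
        omega
      · rw [Osum_pascalM, ihM.2, subO M]
        have h1 : 2 * (M + 1) = (2 * M + 1) + 1 := by ring
        rw [h1, Nat.choose_succ_succ' (2 * M + 1) s,
          show 2 * M + 1 = (2 * M) + 1 from rfl, Nat.choose_succ_succ' (2 * M) s]
        omega

lemma C_natCast (a b : ℕ) : C (a : ℤ) (b : ℤ) = (a.choose b : ℤ) := by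
  unfold C
  split
  · next h => simp
  · next h =>
    have hb : a < b := by omega
    simp [Nat.choose_eq_zero_of_lt hb]

lemma C_eq_zero_of_lt {a b : ℤ} (h : a < b) : C a b = 0 := by
  unfold C; rw [if_neg]; omega

lemma C_eq_zero_of_neg {a b : ℤ} (h : b < 0) : C a b = 0 := by
  unfold C; rw [if_neg]; omega

lemma C_pos {a b : ℤ} (h0 : 0 ≤ b) (h1 : b ≤ a) : 0 < C a b := by
  unfold C
  rw [if_pos ⟨h0, h1⟩]
  exact_mod_cast Nat.choose_pos (by omega)

lemma choose_two_mul_self (c : ℕ) (hc : 1 ≤ c) :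
    (2 * c).choose c = 2 * (2 * c - 1).choose c := by
  obtain ⟨d, rfl⟩ : ∃ d, c = d + 1 := ⟨c - 1, by omega⟩
  have h1 : 2 * (d + 1) = (2 * d + 1) + 1 := by ring
  have h2 : 2 * d + 1 + 1 - 1 = 2 * d + 1 := by omega
  rw [h1, Nat.choose_succ_succ' (2 * d + 1) d, h2]
  have hsymm : (2 * d + 1).choose d = (2 * d + 1).choose (d + 1) := by
    have := Nat.choose_symm (n := 2 * d + 1) (k := d + 1) (by omega)
    have he : 2 * d + 1 - (d + 1) = d := by omega
    rw [he] at this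
    exact this
  omega

lemma stepB (j k ℓ : ℕ) (hkj : k < j) :
    C ((2 * ℓ : ℤ) + 1) ((k : ℤ) + 1) * C ((j : ℤ) + 1) ((2 * ℓ : ℤ) + 1)
      = C ((j : ℤ) - k) ((2 * ℓ : ℤ) - k) * C ((j : ℤ) + 1) ((k : ℤ) + 1) := by
  by_cases h1 : 2 * ℓ < k
  · rw [C_eq_zero_of_lt (show (2 * ℓ : ℤ) + 1 < (k : ℤ) + 1 by push_cast; omega),
      C_eq_zero_of_neg (show (2 * ℓ : ℤ) - k < 0 by push_cast; omega)]
    ring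
  · by_cases h2 : j < 2 * ℓ
    · rw [C_eq_zero_of_lt (show (j : ℤ) + 1 < (2 * ℓ : ℤ) + 1 by push_cast; omega),
        C_eq_zero_of_lt (show (j : ℤ) - k < (2 * ℓ : ℤ) - k by push_cast; omega)]
      ring
    · have e1 : (2 * ℓ : ℤ) + 1 = ((2 * ℓ + 1 : ℕ) : ℤ) := by push_cast; ring
      have e2 : (k : ℤ) + 1 = ((k + 1 : ℕ) : ℤ) := by push_cast; ring
      have e3 : (j : ℤ) + 1 = ((j + 1 : ℕ) : ℤ) := by push_cast; ring
      have e4 : (j : ℤ) - k = ((j - k : ℕ) : ℤ) := by omega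
      have e5 : (2 * ℓ : ℤ) - k = ((2 * ℓ - k : ℕ) : ℤ) := by omega
      rw [e1, e2, e3, e4, e5, C_natCast, C_natCast, C_natCast, C_natCast]
      have key := Nat.choose_mul (n := j + 1) (k := 2 * ℓ + 1) (s := k + 1)
        (by omega)
      have f1 : j + 1 - (k + 1) = j - k := by omega
      have f2 : 2 * ℓ + 1 - (k + 1) = 2 * ℓ - k := by omega
      rw [f1, f2] at key
      have : (2 * ℓ + 1).choose (k + 1) * (j + 1).choose (2 * ℓ + 1)
          = (j - k).choose (2 * ℓ - k) * (j + 1).choose (k + 1) := by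
        rw [mul_comm, key, mul_comm]
      exact_mod_cast this

lemma stepC (m j k : ℕ) (hk : k < 2 * m) (hkj : k < j) (hj : j ≤ 2 * m) :
    ∑ ℓ ∈ range (m + 1),
        C ((m : ℤ) + ℓ - k - 1) ((j : ℤ) - k - 1) * C ((j : ℤ) - k) ((2 * ℓ : ℤ) - k)
      = C ((2 * m : ℤ) - k - 1) ((j : ℤ) - k - 1) := by
  obtain ⟨r, hr⟩ : ∃ r, j - k = r + 1 := ⟨j - k - 1, by omega⟩
  rcases Nat.even_or_odd k with ⟨a, hk2⟩ | ⟨a, hk2⟩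
  · -- k = a + a (even)
    have ham : a < m := by omega
    have hsub : Finset.Ico a (m + 1) ⊆ range (m + 1) := by
      intro x hx
      simp only [Finset.mem_Ico] at hx
      simp only [Finset.mem_range]
      omega
    have hz : ∀ x ∈ range (m + 1), x ∉ Finset.Ico a (m + 1) →
        C ((m : ℤ) + x - k - 1) ((j : ℤ) - k - 1) * C ((j : ℤ) - k) ((2 * x : ℤ) - k) = 0 := by
      intro x hx hx'
      simp only [Finset.mem_range] at hx
      simp only [Finset.mem_Ico] at hx'
      have hxa : x < a := by omega
      rw [C_eq_zero_of_neg (show (2 * x : ℤ) - k < 0 by push_cast; omega), mul_zero]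
    rw [← Finset.sum_subset hsub hz, Finset.sum_Ico_eq_sum_range]
    have h2 : ∀ u ∈ range (m + 1 - a),
        C ((m : ℤ) + ((a + u : ℕ) : ℤ) - k - 1) ((j : ℤ) - k - 1)
          * C ((j : ℤ) - k) (2 * ((a + u : ℕ) : ℤ) - k)
          = (((r + 1).choose (2 * u) * ((m - a - 1) + u).choose r : ℕ) : ℤ) := by
      intro u hu
      have e1 : (m : ℤ) + (a + u : ℕ) - k - 1 = (((m - a - 1) + u : ℕ) : ℤ) := by
        push_cast; omega
      have e2 : (j : ℤ) - k - 1 = ((r : ℕ) : ℤ) := by omega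
      have e3 : (j : ℤ) - k = ((r + 1 : ℕ) : ℤ) := by omega
      have e4 : 2 * ((a + u : ℕ) : ℤ) - k = ((2 * u : ℕ) : ℤ) := by push_cast; omega
      rw [e1, e2, e3, e4, C_natCast, C_natCast]
      push_cast
      ring
    rw [Finset.sum_congr rfl h2, ← Nat.cast_sum,
      Esum_eq_range (N := r + 1) (B := m + 1 - a) r (m - a - 1) (by omega),
      (diagEO r (m - a - 1)).1]
    have e5 : (2 * m : ℤ) - k - 1 = ((2 * (m - a - 1) + 1 : ℕ) : ℤ) := by push_cast; omega
    have e6 : (j : ℤ) - k - 1 = ((r : ℕ) : ℤ) := by omega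
    rw [e5, e6, C_natCast]
  · -- k = 2 * a + 1 (odd)
    have ham : a + 1 ≤ m := by omega
    have hsub : Finset.Ico (a + 1) (m + 1) ⊆ range (m + 1) := by
      intro x hx
      simp only [Finset.mem_Ico] at hx
      simp only [Finset.mem_range]
      omega
    have hz : ∀ x ∈ range (m + 1), x ∉ Finset.Ico (a + 1) (m + 1) →
        C ((m : ℤ) + x - k - 1) ((j : ℤ) - k - 1) * C ((j : ℤ) - k) ((2 * x : ℤ) - k) = 0 := by
      intro x hx hx'
      simp only [Finset.mem_range] at hx
      simp only [Finset.mem_Ico] at hx'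
      have hxa : x < a + 1 := by omega
      rw [C_eq_zero_of_neg (show (2 * x : ℤ) - k < 0 by push_cast; omega), mul_zero]
    rw [← Finset.sum_subset hsub hz, Finset.sum_Ico_eq_sum_range]
    have h2 : ∀ u ∈ range (m + 1 - (a + 1)),
        C ((m : ℤ) + ((a + 1 + u : ℕ) : ℤ) - k - 1) ((j : ℤ) - k - 1)
          * C ((j : ℤ) - k) (2 * ((a + 1 + u : ℕ) : ℤ) - k)
          = (((r + 1).choose (2 * u + 1) * ((m - a - 1) + u).choose r : ℕ) : ℤ) := by
      intro u hu
      have e1 : (m : ℤ) + (a + 1 + u : ℕ) - k - 1 = (((m - a - 1) + u : ℕ) : ℤ) := by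
        push_cast; omega
      have e2 : (j : ℤ) - k - 1 = ((r : ℕ) : ℤ) := by omega
      have e3 : (j : ℤ) - k = ((r + 1 : ℕ) : ℤ) := by omega
      have e4 : 2 * ((a + 1 + u : ℕ) : ℤ) - k = ((2 * u + 1 : ℕ) : ℤ) := by push_cast; omega
      rw [e1, e2, e3, e4, C_natCast, C_natCast]
      push_cast
      ring
    rw [Finset.sum_congr rfl h2, ← Nat.cast_sum,
      Osum_eq_range (N := r + 1) (B := m + 1 - (a + 1)) r (m - a - 1) (by omega),
      (diagEO r (m - a - 1)).2]
    have e5 : (2 * m : ℤ) - k - 1 = ((2 * (m - a - 1) : ℕ) : ℤ) := by push_cast; omega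
    have e6 : (j : ℤ) - k - 1 = ((r : ℕ) : ℤ) := by omega
    rw [e5, e6, C_natCast]

/-- For `n = 2m`, `k < n`, `k ≤ j ≤ n`: the sum (over those `ℓ` with
`C(n−k−1, m−ℓ) ≠ 0`) of `[C(n−j, m−ℓ)/C(n−k−1, m−ℓ)] · C(2ℓ+1, k+1) · C(j+1, 2ℓ+1)`
equals `C(j+1, k+1)` when `j > k`, and equals `1 + (−1)^k` when `j = k`. -/
theorem binomial_ratio_sum (m j k : ℕ) (hk : k < 2 * m) (hkj : k ≤ j) (hj : j ≤ 2 * m) :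
    (k < j →
      ∑ ℓ ∈ Finset.range (m + 1),
        (if (C ((2 * m : ℤ) - k - 1) ((m : ℤ) - ℓ) : ℚ) ≠ 0 then
          (C ((2 * m : ℤ) - j) ((m : ℤ) - ℓ) : ℚ) / (C ((2 * m : ℤ) - k - 1) ((m : ℤ) - ℓ) : ℚ)
            * (C ((2 * ℓ : ℤ) + 1) ((k : ℤ) + 1) : ℚ) * (C ((j : ℤ) + 1) ((2 * ℓ : ℤ) + 1) : ℚ)
        else 0)
      = (C ((j : ℤ) + 1) ((k : ℤ) + 1) : ℚ)) ∧
    (j = k →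
      ∑ ℓ ∈ Finset.range (m + 1),
        (if (C ((2 * m : ℤ) - k - 1) ((m : ℤ) - ℓ) : ℚ) ≠ 0 then
          (C ((2 * m : ℤ) - j) ((m : ℤ) - ℓ) : ℚ) / (C ((2 * m : ℤ) - k - 1) ((m : ℤ) - ℓ) : ℚ)
            * (C ((2 * ℓ : ℤ) + 1) ((k : ℤ) + 1) : ℚ) * (C ((j : ℤ) + 1) ((2 * ℓ : ℤ) + 1) : ℚ)
        else 0)
      = 1 + (-1 : ℚ) ^ k) := by
  constructor
  · -- part 1 : k < j
    intro hkj'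
    have hcden_pos : 0 < C ((2 * m : ℤ) - k - 1) ((j : ℤ) - k - 1) :=
      C_pos (by push_cast; omega) (by push_cast; omega)
    have hcdenQ : ((C ((2 * m : ℤ) - k - 1) ((j : ℤ) - k - 1) : ℤ) : ℚ) ≠ 0 := by
      exact_mod_cast hcden_pos.ne'
    have hterm : ∀ ℓ ∈ range (m + 1),
        (if (C ((2 * m : ℤ) - k - 1) ((m : ℤ) - ℓ) : ℚ) ≠ 0 then
          (C ((2 * m : ℤ) - j) ((m : ℤ) - ℓ) : ℚ) / (C ((2 * m : ℤ) - k - 1) ((m : ℤ) - ℓ) : ℚ)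
            * (C ((2 * ℓ : ℤ) + 1) ((k : ℤ) + 1) : ℚ) * (C ((j : ℤ) + 1) ((2 * ℓ : ℤ) + 1) : ℚ)
        else 0)
        = ((C ((m : ℤ) + ℓ - k - 1) ((j : ℤ) - k - 1)
              * C ((j : ℤ) - k) (2 * (ℓ : ℤ) - k) : ℤ) : ℚ)
            * (C ((j : ℤ) + 1) ((k : ℤ) + 1) : ℚ)
            / (C ((2 * m : ℤ) - k - 1) ((j : ℤ) - k - 1) : ℚ) := by
      intro ℓ hℓ
      have hℓm : ℓ ≤ m := by
        simp only [Finset.mem_range] at hℓ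
        omega
      by_cases hd : k + 1 ≤ m + ℓ
      · -- denominator valid and positive
        have hdpos : 0 < C ((2 * m : ℤ) - k - 1) ((m : ℤ) - ℓ) :=
          C_pos (by push_cast; omega) (by push_cast; omega)
        have hdQ : (C ((2 * m : ℤ) - k - 1) ((m : ℤ) - ℓ) : ℚ) ≠ 0 := by
          exact_mod_cast hdpos.ne'
        rw [if_pos hdQ]
        have key : C ((2 * m : ℤ) - j) ((m : ℤ) - ℓ) * C ((2 * m : ℤ) - k - 1) ((j : ℤ) - k - 1)
            = C ((m : ℤ) + ℓ - k - 1) ((j : ℤ) - k - 1)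
              * C ((2 * m : ℤ) - k - 1) ((m : ℤ) - ℓ) := by
          by_cases hj' : j ≤ m + ℓ
          · have e1 : (2 * m : ℤ) - j = ((2 * m - j : ℕ) : ℤ) := by omega
            have e2 : (m : ℤ) - ℓ = ((m - ℓ : ℕ) : ℤ) := by omega
            have e3 : (2 * m : ℤ) - k - 1 = ((2 * m - k - 1 : ℕ) : ℤ) := by omega
            have e4 : (j : ℤ) - k - 1 = ((j - k - 1 : ℕ) : ℤ) := by omega
            have e5 : (m : ℤ) + ℓ - k - 1 = ((m + ℓ - k - 1 : ℕ) : ℤ) := by omega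
            rw [e1, e2, e3, e4, e5, C_natCast, C_natCast, C_natCast, C_natCast]
            have h1 : 2 * m - j = (2 * m - k - 1) - (j - k - 1) := by omega
            have h2 : m + ℓ - k - 1 = (2 * m - k - 1) - (m - ℓ) := by omega
            have hcross := cross_choose (2 * m - k - 1) (m - ℓ) (j - k - 1) (by omega)
            rw [h1, h2]
            exact_mod_cast hcross
          · rw [C_eq_zero_of_lt (show (2 * m : ℤ) - j < (m : ℤ) - ℓ by omega),
              C_eq_zero_of_lt (show (m : ℤ) + ℓ - k - 1 < (j : ℤ) - k - 1 by omega)]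
            ring
        have keyQ : (C ((2 * m : ℤ) - j) ((m : ℤ) - ℓ) : ℚ)
              * (C ((2 * m : ℤ) - k - 1) ((j : ℤ) - k - 1) : ℚ)
            = (C ((m : ℤ) + ℓ - k - 1) ((j : ℤ) - k - 1) : ℚ)
              * (C ((2 * m : ℤ) - k - 1) ((m : ℤ) - ℓ) : ℚ) := by
          exact_mod_cast key
        have hBC : (C ((2 * ℓ : ℤ) + 1) ((k : ℤ) + 1) : ℚ)
              * (C ((j : ℤ) + 1) ((2 * ℓ : ℤ) + 1) : ℚ)
            = (C ((j : ℤ) - k) (2 * (ℓ : ℤ) - k) : ℚ)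
              * (C ((j : ℤ) + 1) ((k : ℤ) + 1) : ℚ) := by
          exact_mod_cast stepB j k ℓ hkj'
        push_cast
        field_simp
        linear_combination
          ((C ((2 * ℓ : ℤ) + 1) ((k : ℤ) + 1) : ℚ)
            * (C ((j : ℤ) + 1) ((2 * ℓ : ℤ) + 1) : ℚ)) * keyQ
          + ((C ((m : ℤ) + ℓ - k - 1) ((j : ℤ) - k - 1) : ℚ)
            * (C ((2 * m : ℤ) - k - 1) ((m : ℤ) - ℓ) : ℚ)) * hBC
      · -- denominator zero
        have hd0 : C ((2 * m : ℤ) - k - 1) ((m : ℤ) - ℓ) = 0 :=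
          C_eq_zero_of_lt (by omega)
        have hE0 : C ((m : ℤ) + ℓ - k - 1) ((j : ℤ) - k - 1) = 0 :=
          C_eq_zero_of_lt (by omega)
        rw [hd0, hE0]
        simp
    rw [Finset.sum_congr rfl hterm]
    have hsplit : ∀ ℓ ∈ range (m + 1),
        ((C ((m : ℤ) + ℓ - k - 1) ((j : ℤ) - k - 1)
            * C ((j : ℤ) - k) (2 * (ℓ : ℤ) - k) : ℤ) : ℚ)
          * (C ((j : ℤ) + 1) ((k : ℤ) + 1) : ℚ)
          / (C ((2 * m : ℤ) - k - 1) ((j : ℤ) - k - 1) : ℚ)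
        = ((C ((m : ℤ) + ℓ - k - 1) ((j : ℤ) - k - 1)
            * C ((j : ℤ) - k) (2 * (ℓ : ℤ) - k) : ℤ) : ℚ)
          * ((C ((j : ℤ) + 1) ((k : ℤ) + 1) : ℚ)
          / (C ((2 * m : ℤ) - k - 1) ((j : ℤ) - k - 1) : ℚ)) := fun ℓ _ => by ring
    rw [Finset.sum_congr rfl hsplit, ← Finset.sum_mul, ← Int.cast_sum]
    have := stepC m j k hk hkj' hj
    rw [this, mul_comm, div_mul_cancel₀ _ hcdenQ]
  · -- part 2 : j = k
    intro hjk
    subst hjk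
    rcases Nat.even_or_odd j with ⟨a, ha⟩ | hodd
    · -- j even, j = a + a
      have ham : a < m := by omega
      rw [Finset.sum_eq_single a]
      · have hdpos : 0 < C ((2 * m : ℤ) - j - 1) ((m : ℤ) - a) :=
          C_pos (by push_cast; omega) (by push_cast; omega)
        have hdQ : (C ((2 * m : ℤ) - j - 1) ((m : ℤ) - a) : ℚ) ≠ 0 := by
          exact_mod_cast hdpos.ne'
        rw [if_pos hdQ]
        have hB : C ((2 * a : ℤ) + 1) ((j : ℤ) + 1) = 1 := by
          have e1 : (2 * a : ℤ) + 1 = ((2 * a + 1 : ℕ) : ℤ) := by push_cast; ring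
          have e2 : (j : ℤ) + 1 = ((2 * a + 1 : ℕ) : ℤ) := by push_cast; omega
          rw [e1, e2, C_natCast, Nat.choose_self]
          rfl
        have hC : C ((j : ℤ) + 1) ((2 * a : ℤ) + 1) = 1 := by
          have e1 : (2 * a : ℤ) + 1 = ((2 * a + 1 : ℕ) : ℤ) := by push_cast; ring
          have e2 : (j : ℤ) + 1 = ((2 * a + 1 : ℕ) : ℤ) := by push_cast; omega
          rw [e1, e2, C_natCast, Nat.choose_self]
          rfl
        have hA : C ((2 * m : ℤ) - j) ((m : ℤ) - a)
            = 2 * C ((2 * m : ℤ) - j - 1) ((m : ℤ) - a) := by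
          have e1 : (2 * m : ℤ) - j = ((2 * (m - a) : ℕ) : ℤ) := by push_cast; omega
          have e2 : (m : ℤ) - a = ((m - a : ℕ) : ℤ) := by omega
          have e3 : (2 * m : ℤ) - j - 1 = ((2 * (m - a) - 1 : ℕ) : ℤ) := by push_cast; omega
          rw [e3, e1, e2, C_natCast, C_natCast]
          exact_mod_cast choose_two_mul_self (m - a) (by omega)
        rw [hA, hB, hC]
        have hev : (-1 : ℚ) ^ j = 1 := Even.neg_one_pow ⟨a, ha⟩
        rw [hev]
        push_cast
        field_simp
        norm_num
      · intro b hb hba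
        by_cases hcond : (C ((2 * m : ℤ) - j - 1) ((m : ℤ) - b) : ℚ) ≠ 0
        · rw [if_pos hcond]
          rcases lt_or_ge (2 * b) j with h2b | h2b
          · rw [C_eq_zero_of_lt (show (2 * b : ℤ) + 1 < (j : ℤ) + 1 by push_cast; omega)]
            push_cast
            ring
          · have : j < 2 * b := by omega
            rw [C_eq_zero_of_lt (show (j : ℤ) + 1 < (2 * b : ℤ) + 1 by push_cast; omega)]
            push_cast
            ring
        · rw [if_neg hcond]
      · intro h
        exact absurd (Finset.mem_range.2 (by omega)) h
    · -- j odd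
      have hsum : ∑ ℓ ∈ Finset.range (m + 1),
          (if (C ((2 * m : ℤ) - j - 1) ((m : ℤ) - ℓ) : ℚ) ≠ 0 then
            (C ((2 * m : ℤ) - j) ((m : ℤ) - ℓ) : ℚ) / (C ((2 * m : ℤ) - j - 1) ((m : ℤ) - ℓ) : ℚ)
              * (C ((2 * ℓ : ℤ) + 1) ((j : ℤ) + 1) : ℚ) * (C ((j : ℤ) + 1) ((2 * ℓ : ℤ) + 1) : ℚ)
          else 0) = 0 := by
        apply Finset.sum_eq_zero
        intro b hb
        by_cases hcond : (C ((2 * m : ℤ) - j - 1) ((m : ℤ) - b) : ℚ) ≠ 0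
        · rw [if_pos hcond]
          rcases lt_or_ge (2 * b) j with h2b | h2b
          · rw [C_eq_zero_of_lt (show (2 * b : ℤ) + 1 < (j : ℤ) + 1 by push_cast; omega)]
            push_cast
            ring
          · have : j < 2 * b := by
              rcases hodd with ⟨c, hc⟩
              omega
            rw [C_eq_zero_of_lt (show (j : ℤ) + 1 < (2 * b : ℤ) + 1 by push_cast; omega)]
            push_cast
            ring
        · rw [if_neg hcond]
      rw [hsum, hodd.neg_one_pow]
      ring
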